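/- For every n \geq 1, the symmetric tube S_n^(0) of the star graph S_n = K_{1,n} is isomorphic to the graph obtained from the once-subdivision of the complete graph K_n by attaching one new pendant vertex to each of the n branch vertices (the vertices coming from V(K_n)). -/

import Mathlib

open SimpleGraph

variable {V : Type*}

/-- A pair-vertex of the symmetric tube: a vertex `v` together with an unordered pair
of two distinct neighbors of `v`. -/
abbrev TubePair (G : SimpleGraph V) : Type _ :=
  {p : V × Sym2 V // ¬ p.2.IsDiag ∧ ∀ x ∈ p.2, G.Adj p.1 x}

/-- The vertex set of the symmetric tube: darts of `G` together with pair-vertices. -/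
abbrev TubeVertex (G : SimpleGraph V) : Type _ := G.Dart ⊕ TubePair G

/-- The symmetric tube `G⁽⁰⁾` of a simple graph `G`: an X-edge joins the darts `(v,u)` and
`(u,v)` for each edge `{v,u}` of `G`, and Y-edges join the pair-vertex `(v,{a,b})` to each of
the darts `(v,a)` and `(v,b)`. -/
def tube (G : SimpleGraph V) : SimpleGraph (TubeVertex G) where
  Adj x y :=
    match x, y with
    | Sum.inl d, Sum.inl d' => d' = d.symm
    | Sum.inl d, Sum.inr p => p.1.1 = d.fst ∧ d.snd ∈ p.1.2
    | Sum.inr p, Sum.inl d => p.1.1 = d.fst ∧ d.snd ∈ p.1.2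
    | Sum.inr _, Sum.inr _ => False
  symm := ⟨by
    rintro (d | p) (d' | p') h
    · simp only at h ⊢
      rw [h, SimpleGraph.Dart.symm_symm]
    · exact h
    · exact h
    · exact h⟩
  loopless := ⟨by
    rintro (d | p) h
    · exact SimpleGraph.Dart.symm_ne d h.symm
    · exact h⟩

/-- The star graph `Sₙ = K_{1,n}` on `Fin (n+1)`: the center is `0` and the `n` leaves are
the nonzero elements. -/
def starGraph (n : ℕ) : SimpleGraph (Fin (n + 1)) where
  Adj x y := (x = 0 ∧ y ≠ 0) ∨ (y = 0 ∧ x ≠ 0)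
  symm := ⟨fun x y h => Or.symm h⟩
  loopless := ⟨by rintro x (⟨h1, h2⟩ | ⟨h1, h2⟩) <;> exact h2 h1⟩

/-- The graph obtained from the once-subdivision of the complete graph `Kₙ` by attaching one
new pendant vertex to each of the `n` branch vertices.  The first summand consists of the
pendant vertices, the second of the branch vertices (the vertices coming from `V(Kₙ)`), and
the third of the subdivision vertices (one for each edge of `Kₙ`). -/
def subdividedCompleteWithPendants (n : ℕ) :
    SimpleGraph (Fin n ⊕ Fin n ⊕ {s : Sym2 (Fin n) // ¬ s.IsDiag}) where
  Adj x y :=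
    match x, y with
    | Sum.inl i, Sum.inr (Sum.inl j) => i = j
    | Sum.inr (Sum.inl j), Sum.inl i => i = j
    | Sum.inr (Sum.inl i), Sum.inr (Sum.inr s) => i ∈ s.1
    | Sum.inr (Sum.inr s), Sum.inr (Sum.inl i) => i ∈ s.1
    | _, _ => False
  symm := ⟨by
    rintro (i | j | s) (i' | j' | s') h <;> simp_all⟩
  loopless := ⟨by
    rintro (i | j | s) h <;> simp_all⟩

namespace Stmt4Aux

variable (m : ℕ)

def f (x : Fin (m + 2)) : Fin (m + 1) := ⟨x.val - 1, by omega⟩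
def g (j : Fin (m + 1)) : Fin (m + 2) := ⟨j.val + 1, by omega⟩

lemma g_ne_zero (j : Fin (m + 1)) : g m j ≠ 0 := by
  intro h; have := congrArg Fin.val h; rw [Fin.val_zero] at this; exact Nat.succ_ne_zero _ this

lemma f_g (j : Fin (m + 1)) : f m (g m j) = j := by
  simp [f, g]

lemma g_f (x : Fin (m + 2)) (hx : x ≠ 0) : g m (f m x) = x := by
  have : x.val ≠ 0 := fun h => hx (Fin.ext h)
  simp only [f, g, Fin.ext_iff]
  omega

lemma f_inj {x y : Fin (m + 2)} (hx : x ≠ 0) (hy : y ≠ 0) (h : f m x = f m y) : x = y := by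
  rw [← g_f m x hx, ← g_f m y hy, h]

lemma pair_mem_ne_zero (p : TubePair (_root_.starGraph (m + 1))) {x : Fin (m + 2)}
    (hx : x ∈ p.1.2) : x ≠ 0 := by
  intro h0
  obtain ⟨⟨v, s⟩, hd, ha⟩ := p
  simp only at hx
  rcases ha x hx with ⟨hv, hx0⟩ | ⟨hx0, hv⟩
  · exact hx0 h0
  · induction s using Sym2.inductionOn with
    | hf a b =>
      have ha0 : a = 0 := by
        rcases ha a (Sym2.mem_mk_left a b) with ⟨h, _⟩ | ⟨h, _⟩
        · exact absurd h hv
        · exact h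
      have hb0 : b = 0 := by
        rcases ha b (Sym2.mem_mk_right a b) with ⟨h, _⟩ | ⟨h, _⟩
        · exact absurd h hv
        · exact h
      exact hd (Sym2.mk_isDiag_iff.mpr (ha0.trans hb0.symm))

lemma pair_fst (p : TubePair (_root_.starGraph (m + 1))) : p.1.1 = 0 := by
  obtain ⟨⟨v, s⟩, hd, ha⟩ := p
  induction s using Sym2.inductionOn with
  | hf a b =>
    by_contra hv
    have ha0 : a = 0 := by
      rcases ha a (Sym2.mem_mk_left a b) with ⟨h, _⟩ | ⟨h, _⟩
      · exact absurd h hv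
      · exact h
    have hb0 : b = 0 := by
      rcases ha b (Sym2.mem_mk_right a b) with ⟨h, _⟩ | ⟨h, _⟩
      · exact absurd h hv
      · exact h
    exact hd (Sym2.mk_isDiag_iff.mpr (ha0.trans hb0.symm))

lemma dart_cases (d : (_root_.starGraph (m + 1)).Dart) :
    (d.fst = 0 ∧ d.snd ≠ 0) ∨ (d.snd = 0 ∧ d.fst ≠ 0) := d.adj

def fwdPair (p : TubePair (_root_.starGraph (m + 1))) : {s : Sym2 (Fin (m + 1)) // ¬ s.IsDiag} :=
  ⟨Sym2.map (f m) p.1.2, by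
    obtain ⟨⟨v, s⟩, hd, ha⟩ := p
    induction s using Sym2.inductionOn with
    | hf a b =>
      simp only [Sym2.map_pair_eq, Sym2.mk_isDiag_iff] at *
      intro hfab
      have hane : a ≠ 0 := pair_mem_ne_zero m ⟨⟨v, s(a,b)⟩, hd, ha⟩ (Sym2.mem_mk_left a b)
      have hbne : b ≠ 0 := pair_mem_ne_zero m ⟨⟨v, s(a,b)⟩, hd, ha⟩ (Sym2.mem_mk_right a b)
      exact hd (f_inj m hane hbne hfab)⟩

lemma fwdPair_val (p : TubePair (_root_.starGraph (m + 1))) :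
    (fwdPair m p).1 = Sym2.map (f m) p.1.2 := rfl

def bwdPair (s : {s : Sym2 (Fin (m + 1)) // ¬ s.IsDiag}) : TubePair (_root_.starGraph (m + 1)) :=
  ⟨(0, Sym2.map (g m) s.1), by
    constructor
    · obtain ⟨s, hd⟩ := s
      induction s using Sym2.inductionOn with
      | hf a b =>
        simp only [Sym2.map_pair_eq, Sym2.mk_isDiag_iff] at *
        intro h
        exact hd (by simpa [g, Fin.ext_iff] using h)
    · intro x hx
      rw [Sym2.mem_map] at hx
      obtain ⟨y, _, rfl⟩ := hx
      exact Or.inl ⟨rfl, g_ne_zero m y⟩⟩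

def fwd : TubeVertex (_root_.starGraph (m + 1)) →
    Fin (m + 1) ⊕ Fin (m + 1) ⊕ {s : Sym2 (Fin (m + 1)) // ¬ s.IsDiag}
  | Sum.inl d => if d.fst = 0 then Sum.inr (Sum.inl (f m d.snd)) else Sum.inl (f m d.fst)
  | Sum.inr p => Sum.inr (Sum.inr (fwdPair m p))

def bwd : Fin (m + 1) ⊕ Fin (m + 1) ⊕ {s : Sym2 (Fin (m + 1)) // ¬ s.IsDiag} →
    TubeVertex (_root_.starGraph (m + 1))
  | Sum.inl i => Sum.inl ⟨(g m i, 0), Or.inr ⟨rfl, g_ne_zero m i⟩⟩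
  | Sum.inr (Sum.inl j) => Sum.inl ⟨(0, g m j), Or.inl ⟨rfl, g_ne_zero m j⟩⟩
  | Sum.inr (Sum.inr s) => Sum.inr (bwdPair m s)

lemma fwd_inl_center (d : (_root_.starGraph (m + 1)).Dart) (h : d.fst = 0) :
    fwd m (Sum.inl d) = Sum.inr (Sum.inl (f m d.snd)) := by
  simp only [fwd]; rw [if_pos h]

lemma fwd_inl_leaf (d : (_root_.starGraph (m + 1)).Dart) (h : d.fst ≠ 0) :
    fwd m (Sum.inl d) = Sum.inl (f m d.fst) := by
  simp only [fwd]; rw [if_neg h]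

lemma fwd_inr (p : TubePair (_root_.starGraph (m + 1))) :
    fwd m (Sum.inr p) = Sum.inr (Sum.inr (fwdPair m p)) := rfl

lemma left_inv : Function.LeftInverse (bwd m) (fwd m) := by
  rintro (d | p)
  · rcases dart_cases m d with ⟨h1, h2⟩ | ⟨h1, h2⟩
    · rw [fwd_inl_center m d h1]
      show Sum.inl _ = Sum.inl d
      congr 1
      apply SimpleGraph.Dart.ext
      exact Prod.ext h1.symm (g_f m d.snd h2)
    · rw [fwd_inl_leaf m d h2]
      show Sum.inl _ = Sum.inl d
      congr 1
      apply SimpleGraph.Dart.ext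
      exact Prod.ext (g_f m d.fst h2) h1.symm
  · rw [fwd_inr]
    show Sum.inr (bwdPair m (fwdPair m p)) = Sum.inr p
    congr 1
    obtain ⟨⟨v, s⟩, hd, ha⟩ := p
    induction s using Sym2.inductionOn with
    | hf a b =>
      have hane : a ≠ 0 := pair_mem_ne_zero m ⟨⟨v, s(a,b)⟩, hd, ha⟩ (Sym2.mem_mk_left a b)
      have hbne : b ≠ 0 := pair_mem_ne_zero m ⟨⟨v, s(a,b)⟩, hd, ha⟩ (Sym2.mem_mk_right a b)
      have hv : v = 0 := pair_fst m ⟨⟨v, s(a,b)⟩, hd, ha⟩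
      apply Subtype.ext
      show ((0 : Fin (m + 2)), Sym2.map (g m) (Sym2.map (f m) s(a, b))) = (v, s(a, b))
      refine Prod.ext hv.symm ?_
      show Sym2.map (g m) (Sym2.map (f m) s(a, b)) = s(a, b)
      rw [Sym2.map_pair_eq, Sym2.map_pair_eq, g_f m a hane, g_f m b hbne]

lemma right_inv : Function.RightInverse (bwd m) (fwd m) := by
  rintro (i | j | s)
  · rw [show bwd m (Sum.inl i) = Sum.inl ⟨(g m i, 0), Or.inr ⟨rfl, g_ne_zero m i⟩⟩ from rfl]
    rw [fwd_inl_leaf m _ (g_ne_zero m i)]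
    show Sum.inl (f m (g m i)) = _
    rw [f_g]
  · rw [show bwd m (Sum.inr (Sum.inl j)) = Sum.inl ⟨(0, g m j), Or.inl ⟨rfl, g_ne_zero m j⟩⟩
      from rfl]
    rw [fwd_inl_center m _ rfl]
    show Sum.inr (Sum.inl (f m (g m j))) = _
    rw [f_g]
  · rw [show bwd m (Sum.inr (Sum.inr s)) = Sum.inr (bwdPair m s) from rfl, fwd_inr]
    congr 2
    apply Subtype.ext
    obtain ⟨s, hd⟩ := s
    induction s using Sym2.inductionOn with
    | hf a b =>
      show Sym2.map (f m) (Sym2.map (g m) s(a, b)) = s(a, b)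
      rw [Sym2.map_pair_eq, Sym2.map_pair_eq, f_g, f_g]

lemma mem_map_iff (p : TubePair (_root_.starGraph (m + 1))) {x : Fin (m + 2)} (hx : x ≠ 0) :
    f m x ∈ Sym2.map (f m) p.1.2 ↔ x ∈ p.1.2 := by
  constructor
  · intro h
    rw [Sym2.mem_map] at h
    obtain ⟨y, hy, hfy⟩ := h
    rwa [f_inj m (pair_mem_ne_zero m p hy) hx hfy] at hy
  · intro h
    exact Sym2.mem_map.mpr ⟨x, h, rfl⟩

def iso : tube (_root_.starGraph (m + 1)) ≃g subdividedCompleteWithPendants (m + 1) := by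
  refine ⟨⟨fwd m, bwd m, left_inv m, right_inv m⟩, @fun a b => ?_⟩
  show (subdividedCompleteWithPendants (m + 1)).Adj (fwd m a) (fwd m b) ↔
    (tube (_root_.starGraph (m + 1))).Adj a b
  rcases a with d | p <;> rcases b with d' | p'
  · show _ ↔ d' = d.symm
    rcases dart_cases m d with ⟨h1, h2⟩ | ⟨h1, h2⟩ <;>
      rcases dart_cases m d' with ⟨k1, k2⟩ | ⟨k1, k2⟩
    · rw [fwd_inl_center m d h1, fwd_inl_center m d' k1]
      refine iff_of_false (fun h => h) (fun h => k2 ?_)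
      rw [h]; exact h1
    · rw [fwd_inl_center m d h1, fwd_inl_leaf m d' k2]
      show f m d'.fst = f m d.snd ↔ d' = d.symm
      constructor
      · intro h
        have := f_inj m k2 h2 h
        apply SimpleGraph.Dart.ext
        exact Prod.ext this (k1.trans h1.symm)
      · intro h
        rw [h]
        rfl
    · rw [fwd_inl_leaf m d h2, fwd_inl_center m d' k1]
      show f m d.fst = f m d'.snd ↔ d' = d.symm
      constructor
      · intro h
        have := f_inj m h2 k2 h
        apply SimpleGraph.Dart.ext
        exact Prod.ext (k1.trans h1.symm) this.symm
      · intro h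
        rw [h]
        rfl
    · rw [fwd_inl_leaf m d h2, fwd_inl_leaf m d' k2]
      refine iff_of_false (fun h => h) (fun h => k2 ?_)
      rw [h]; exact h1
  · rw [fwd_inr]
    show _ ↔ p'.1.1 = d.fst ∧ d.snd ∈ p'.1.2
    rcases dart_cases m d with ⟨h1, h2⟩ | ⟨h1, h2⟩
    · rw [fwd_inl_center m d h1]
      show f m d.snd ∈ (fwdPair m p').1 ↔ _
      rw [fwdPair_val, mem_map_iff m p' h2]
      constructor
      · exact fun h => ⟨(pair_fst m p').trans h1.symm, h⟩
      · exact fun h => h.2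
    · rw [fwd_inl_leaf m d h2]
      refine iff_of_false (fun h => h) (fun h => h2 ?_)
      rw [← h.1]; exact pair_fst m p'
  · rw [fwd_inr]
    show _ ↔ p.1.1 = d'.fst ∧ d'.snd ∈ p.1.2
    rcases dart_cases m d' with ⟨h1, h2⟩ | ⟨h1, h2⟩
    · rw [fwd_inl_center m d' h1]
      show f m d'.snd ∈ (fwdPair m p).1 ↔ _
      rw [fwdPair_val, mem_map_iff m p h2]
      constructor
      · exact fun h => ⟨(pair_fst m p).trans h1.symm, h⟩
      · exact fun h => h.2
    · rw [fwd_inl_leaf m d' h2]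
      refine iff_of_false (fun h => h) (fun h => h2 ?_)
      rw [← h.1]; exact pair_fst m p
  · rw [fwd_inr, fwd_inr]
    exact iff_of_false (fun h => h) (fun h => h)

end Stmt4Aux

/-- For every `n ≥ 1`, the symmetric tube `Sₙ⁽⁰⁾` of the star graph `Sₙ = K_{1,n}` is
isomorphic to the graph obtained from the once-subdivision of `Kₙ` by attaching one new
pendant vertex to each of the `n` branch vertices. -/
theorem stmt_4 (n : ℕ) (hn : 1 ≤ n) :
    Nonempty (tube (_root_.starGraph n) ≃g subdividedCompleteWithPendants n) := by
  obtain ⟨m, rfl⟩ : ∃ m, n = m + 1 := ⟨n - 1, by omega⟩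
  exact ⟨Stmt4Aux.iso m⟩
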